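/- Let d ≥ 1, p ∈ [1,∞], 1 < α ≤ 2, x₀ ∈ ℝ^d, and let ϑ : ℝ^d → ℝ be continuously differentiable with |∇ϑ(x) − ∇ϑ(y)| ≤ H |x−y|^{α−1} for all x, y. Define, for 0 < δ ≤ 1 and smooth compactly supported φ : ℝ^d → ℝ, the functions (Δ_{ϑ,δ}φ)(x) = ϑ(δx + x₀) Δφ(x) + δ ∇ϑ(δx + x₀)·∇φ(x) and (Δ'φ)(x) = (∇ϑ(x₀)·x) Δφ(x) + ∇ϑ(x₀)·∇φ(x). Then there is a constant C = C(H, α, d) such that ‖ Δ_{ϑ,δ}φ − ϑ(x₀) Δφ − δ Δ'φ ‖_{L^p(ℝ^d)} ≤ C δ^α ‖φ‖_{W̄^{2,p}_α}. -/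

import Mathlib

open MeasureTheory Real
open scoped ENNReal NNReal
noncomputable section

abbrev Esp (d : ℕ) := EuclideanSpace ℝ (Fin d)

/-- Partial derivative in direction `i`. -/
def pderiv (d : ℕ) (i : Fin d) (f : Esp d → ℝ) : Esp d → ℝ :=
  fun x => fderiv ℝ f x (EuclideanSpace.single i 1)

/-- Laplacian `Δ f = ∑ i ∂²f/∂x_i²`. -/
def laplacian (d : ℕ) (f : Esp d → ℝ) : Esp d → ℝ :=
  fun x => ∑ i : Fin d, pderiv d i (pderiv d i f) x

/-- Heat kernel on ℝ^d: `q_t(x) = (4πt)^{-d/2} exp(-|x|²/(4t))`. -/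
def heatKernel (d : ℕ) (t : ℝ) (x : Esp d) : ℝ :=
  (4 * π * t) ^ (-(d : ℝ) / 2) * Real.exp (-‖x‖ ^ 2 / (4 * t))

/-- Multi-index partial derivative `∂_γ f`. -/
def mderiv (d : ℕ) (γ : Fin d → ℕ) (f : Esp d → ℝ) : Esp d → ℝ :=
  (List.finRange d).foldr (fun i g => (pderiv d i)^[γ i] g) f

/-- Weighted Sobolev norm
`‖f‖_{W̄^{k,p}_α} = ∑_{|γ| ≤ k} (‖∂_γ f‖_{L^p} + ‖|x|^α ∂_γ f‖_{L^p})`. -/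
def wSobolevNorm (d k : ℕ) (p : ℝ≥0∞) (α : ℝ) (f : Esp d → ℝ) : ℝ≥0∞ :=
  ∑ γ : (Fin d → Fin (k + 1)),
    if (∑ i, (γ i : ℕ)) ≤ k then
      eLpNorm (mderiv d (fun i => (γ i : ℕ)) f) p volume
        + eLpNorm (fun x => ‖x‖ ^ α * mderiv d (fun i => (γ i : ℕ)) f x) p volume
    else 0

/-- The localized divergence-form operator
`(Δ_{ϑ,δ}φ)(x) = ϑ(δx+x₀) Δφ(x) + δ ∇ϑ(δx+x₀)·∇φ(x)`. -/
def locDiffOp (d : ℕ) (ϑ : Esp d → ℝ) (x₀ : Esp d) (δ : ℝ) (φ : Esp d → ℝ) : Esp d → ℝ :=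
  fun x => ϑ (δ • x + x₀) * laplacian d φ x
    + δ * (inner ℝ (gradient ϑ (δ • x + x₀)) (gradient φ x) : ℝ)

/-- The linearization `(Δ'φ)(x) = (∇ϑ(x₀)·x) Δφ(x) + ∇ϑ(x₀)·∇φ(x)`. -/
def linDiffOp (d : ℕ) (ϑ : Esp d → ℝ) (x₀ : Esp d) (φ : Esp d → ℝ) : Esp d → ℝ :=
  fun x => (inner ℝ (gradient ϑ x₀) x : ℝ) * laplacian d φ x
    + (inner ℝ (gradient ϑ x₀) (gradient φ x) : ℝ)

section Helpers
variable {d : ℕ}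

lemma inner_gradient (f : Esp d → ℝ) (x v : Esp d) :
    (inner ℝ (gradient f x) v : ℝ) = fderiv ℝ f x v := by
  rw [gradient, ← InnerProductSpace.toDual_apply_apply, LinearIsometryEquiv.apply_symm_apply]

lemma contDiff_pderiv {φ : Esp d → ℝ} (hφ : ContDiff ℝ (⊤ : ℕ∞) φ) (i : Fin d) :
    ContDiff ℝ (⊤ : ℕ∞) (pderiv d i φ) := by
  exact (ContinuousLinearMap.apply ℝ ℝ (EuclideanSpace.single i 1)).contDiff.comp
    (hφ.fderiv_right (m := (⊤ : ℕ∞)) (by simp))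

lemma continuous_gradient_of_contDiff {ϑ : Esp d → ℝ} (hϑ : ContDiff ℝ 1 ϑ) :
    Continuous (gradient ϑ) := by
  have h1 : Continuous (fderiv ℝ ϑ) := hϑ.continuous_fderiv one_ne_zero
  exact (InnerProductSpace.toDual ℝ (Esp d)).symm.continuous.comp h1

lemma mderiv_single (i : Fin d) (n : ℕ) (f : Esp d → ℝ) :
    mderiv d (fun j => if j = i then n else 0) f = (pderiv d i)^[n] f := by
  have key : ∀ l : List (Fin d), l.Nodup →
      l.foldr (fun j g => (pderiv d j)^[if j = i then n else 0] g) f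
        = if i ∈ l then (pderiv d i)^[n] f else f := by
    intro l hl
    induction l with
    | nil => simp
    | cons a t ih =>
      rw [List.nodup_cons] at hl
      rw [List.foldr_cons, ih hl.2]
      by_cases hai : a = i
      · subst hai
        simp [hl.1]
      · simp [hai, Ne.symm hai, List.mem_cons]
  rw [mderiv, key _ (List.nodup_finRange d)]
  simp [List.mem_finRange]

lemma norm_le_sum_abs (x : Esp d) : ‖x‖ ≤ ∑ i, |x i| := by
  rw [EuclideanSpace.norm_eq]
  have h1 : ∑ i, ‖x i‖ ^ 2 ≤ (∑ i, |x i|) ^ 2 := by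
    rw [sq (∑ i, |x i|), Finset.sum_mul]
    refine Finset.sum_le_sum fun i _ => ?_
    rw [Real.norm_eq_abs, sq]
    exact mul_le_mul_of_nonneg_left
      (Finset.single_le_sum (fun j _ => abs_nonneg (x j)) (Finset.mem_univ i)) (abs_nonneg _)
  calc √(∑ i, ‖x i‖ ^ 2) ≤ √((∑ i, |x i|) ^ 2) := Real.sqrt_le_sqrt h1
    _ = ∑ i, |x i| := Real.sqrt_sq (Finset.sum_nonneg fun i _ => abs_nonneg _)

lemma gradient_apply_coord (φ : Esp d → ℝ) (x : Esp d) (i : Fin d) :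
    (gradient φ x) i = pderiv d i φ x := by
  have h := inner_gradient φ x (EuclideanSpace.single i 1)
  rw [EuclideanSpace.inner_single_right] at h
  simpa [pderiv] using h

lemma norm_gradient_le (φ : Esp d → ℝ) (x : Esp d) :
    ‖gradient φ x‖ ≤ ∑ i, |pderiv d i φ x| := by
  calc ‖gradient φ x‖ ≤ ∑ i, |(gradient φ x) i| := norm_le_sum_abs _
    _ = ∑ i, |pderiv d i φ x| := by
        refine Finset.sum_congr rfl fun i _ => ?_
        rw [gradient_apply_coord]

lemma taylor_bound {ϑ : Esp d → ℝ} (hϑ : ContDiff ℝ 1 ϑ) {α c : ℝ} (hα : 1 < α) (hc : 0 ≤ c)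
    (hH : ∀ x y, ‖gradient ϑ x - gradient ϑ y‖ ≤ c * ‖x - y‖ ^ (α - 1))
    (x₀ v : Esp d) :
    |ϑ (v + x₀) - ϑ x₀ - (inner ℝ (gradient ϑ x₀) v : ℝ)| ≤ c * ‖v‖ ^ α := by
  have hdiff : Differentiable ℝ ϑ := hϑ.differentiable one_ne_zero
  set f : ℝ → ℝ := fun t => ϑ (x₀ + t • v) - t * (inner ℝ (gradient ϑ x₀) v : ℝ) with hf
  have hderiv : ∀ t : ℝ, HasDerivAt f
      ((inner ℝ (gradient ϑ (x₀ + t • v)) v : ℝ) - (inner ℝ (gradient ϑ x₀) v : ℝ)) t := by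
    intro t
    have h1 : HasDerivAt (fun t : ℝ => x₀ + t • v) v t := by
      simpa using ((hasDerivAt_id t).smul_const v).const_add x₀
    have h2 : HasDerivAt (fun t : ℝ => ϑ (x₀ + t • v)) (fderiv ℝ ϑ (x₀ + t • v) v) t :=
      (hdiff (x₀ + t • v)).hasFDerivAt.comp_hasDerivAt t h1
    have h3 : HasDerivAt f (fderiv ℝ ϑ (x₀ + t • v) v - (inner ℝ (gradient ϑ x₀) v : ℝ)) t :=
      h2.sub (hasDerivAt_mul_const _)
    rw [inner_gradient ϑ (x₀ + t • v) v]
    exact h3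
  have hbound : ∀ t ∈ Set.Ico (0:ℝ) 1,
      ‖(inner ℝ (gradient ϑ (x₀ + t • v)) v : ℝ) - (inner ℝ (gradient ϑ x₀) v : ℝ)‖
        ≤ c * ‖v‖ ^ α := by
    intro t ht
    rw [← inner_sub_left]
    have hstep : ‖gradient ϑ (x₀ + t • v) - gradient ϑ x₀‖ ≤ c * ‖v‖ ^ (α - 1) := by
      refine (hH (x₀ + t • v) x₀).trans ?_
      have h4 : ‖x₀ + t • v - x₀‖ = t * ‖v‖ := by
        rw [add_sub_cancel_left, norm_smul, Real.norm_eq_abs, abs_of_nonneg ht.1]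
      rw [h4]
      exact mul_le_mul_of_nonneg_left
        (Real.rpow_le_rpow (mul_nonneg ht.1 (norm_nonneg v))
          (by nlinarith [norm_nonneg v, ht.1, ht.2]) (by linarith)) hc
    calc ‖(inner ℝ (gradient ϑ (x₀ + t • v) - gradient ϑ x₀) v : ℝ)‖
        ≤ ‖gradient ϑ (x₀ + t • v) - gradient ϑ x₀‖ * ‖v‖ := norm_inner_le_norm _ _
      _ ≤ (c * ‖v‖ ^ (α - 1)) * ‖v‖ := by
          gcongr
      _ = c * (‖v‖ ^ (α - 1) * ‖v‖) := by ring
      _ = c * ‖v‖ ^ α := by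
          congr 1
          rcases eq_or_lt_of_le (norm_nonneg v) with hv | hv
          · rw [← hv, Real.zero_rpow (by linarith), Real.zero_rpow (by linarith), zero_mul]
          · rw [← Real.rpow_add_one hv.ne' (α - 1), sub_add_cancel]
  have key := norm_image_sub_le_of_norm_deriv_le_segment_01'
    (f := f) (f' := fun t => (inner ℝ (gradient ϑ (x₀ + t • v)) v : ℝ)
      - (inner ℝ (gradient ϑ x₀) v : ℝ))
    (fun t _ => (hderiv t).hasDerivWithinAt) hbound
  have hf1 : f 1 = ϑ (x₀ + v) - (inner ℝ (gradient ϑ x₀) v : ℝ) := by simp [hf]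
  have hf0 : f 0 = ϑ x₀ := by simp [hf]
  rw [hf1, hf0] at key
  rw [Real.norm_eq_abs] at key
  rw [add_comm v x₀]
  convert key using 2
  ring

lemma le_wSobolevNorm (p : ℝ≥0∞) (α : ℝ) (φ : Esp d → ℝ) (γ : Fin d → Fin 3)
    (h : (∑ i, (γ i : ℕ)) ≤ 2) :
    eLpNorm (mderiv d (fun i => (γ i : ℕ)) φ) p volume
      + eLpNorm (fun x => ‖x‖ ^ α * mderiv d (fun i => (γ i : ℕ)) φ x) p volume
      ≤ wSobolevNorm d 2 p α φ := by
  rw [wSobolevNorm]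
  have h2 := Finset.single_le_sum (f := fun γ' : Fin d → Fin 3 =>
    if (∑ i, (γ' i : ℕ)) ≤ 2 then
      eLpNorm (mderiv d (fun i => (γ' i : ℕ)) φ) p volume
        + eLpNorm (fun x => ‖x‖ ^ α * mderiv d (fun i => (γ' i : ℕ)) φ x) p volume
    else 0) (fun _ _ => zero_le) (Finset.mem_univ γ)
  simpa [h] using h2

end Helpers

/-- Second-order expansion of the localized diffusion operator:
`‖Δ_{ϑ,δ}φ − ϑ(x₀)Δφ − δΔ'φ‖_{L^p} ≤ C δ^α ‖φ‖_{W̄^{2,p}_α}` for `1 < α ≤ 2` and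
`∇ϑ` Hölder of exponent `α−1`. -/
theorem stmt7 (d : ℕ) (hd : 1 ≤ d) (p : ℝ≥0∞) (hp : 1 ≤ p)
    (α : ℝ) (hα1 : 1 < α) (hα2 : α ≤ 2) (x₀ : Esp d)
    (ϑ : Esp d → ℝ) (hϑ : ContDiff ℝ 1 ϑ)
    (H : ℝ) (hH : ∀ x y, ‖gradient ϑ x - gradient ϑ y‖ ≤ H * ‖x - y‖ ^ (α - 1)) :
    ∃ C : ℝ, 0 < C ∧ ∀ δ : ℝ, 0 < δ → δ ≤ 1 →
      ∀ φ : Esp d → ℝ, ContDiff ℝ (⊤ : ℕ∞) φ → HasCompactSupport φ →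
        eLpNorm (fun x => locDiffOp d ϑ x₀ δ φ x - ϑ x₀ * laplacian d φ x
            - δ * linDiffOp d ϑ x₀ φ x) p volume ≤
          ENNReal.ofReal (C * δ ^ α) * wSobolevNorm d 2 p α φ := by
  classical
  set c : ℝ := max H 0 with hcdef
  have hc0 : 0 ≤ c := le_max_right _ _
  have hH' : ∀ x y, ‖gradient ϑ x - gradient ϑ y‖ ≤ c * ‖x - y‖ ^ (α - 1) := fun x y =>
    (hH x y).trans (mul_le_mul_of_nonneg_right (le_max_left _ _)
      (Real.rpow_nonneg (norm_nonneg _) _))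
  have hd1 : (1 : ℝ) ≤ d := by exact_mod_cast hd
  refine ⟨2 * d * (c + 1), by nlinarith, ?_⟩
  intro δ hδ hδ1 φ hφ hφc
  set W := wSobolevNorm d 2 p α φ with hW
  set K : ℝ := c * δ ^ α with hK
  have hδα : (0:ℝ) < δ ^ α := Real.rpow_pos_of_pos hδ α
  have hK0 : 0 ≤ K := by positivity
  -- the three families of functions
  set u : Fin d → Esp d → ℝ := fun i x => ‖x‖ ^ α * pderiv d i (pderiv d i φ) x with hu
  set v : Fin d → Esp d → ℝ := fun i x => pderiv d i φ x with hv
  set w : Fin d → Esp d → ℝ := fun i x => ‖x‖ ^ α * pderiv d i φ x with hw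
  set B : Esp d → ℝ := fun x => (∑ i, |u i x|) + ∑ i, (|v i x| + |w i x|) with hB
  -- continuity facts
  have hφi : ∀ i, Continuous (pderiv d i φ) := fun i => (contDiff_pderiv hφ i).continuous
  have hφii : ∀ i, Continuous (pderiv d i (pderiv d i φ)) := fun i =>
    (contDiff_pderiv (contDiff_pderiv hφ i) i).continuous
  have hrpow : Continuous fun x : Esp d => ‖x‖ ^ α :=
    continuous_norm.rpow_const (fun x => Or.inr (by positivity))
  have hcu : ∀ i, Continuous (u i) := fun i => hrpow.mul (hφii i)
  have hcv : ∀ i, Continuous (v i) := hφi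
  have hcw : ∀ i, Continuous (w i) := fun i => hrpow.mul (hφi i)
  -- pointwise bound
  have hpt : ∀ x, |locDiffOp d ϑ x₀ δ φ x - ϑ x₀ * laplacian d φ x
      - δ * linDiffOp d ϑ x₀ φ x| ≤ K * B x := by
    intro x
    have hxα : (0:ℝ) ≤ ‖x‖ ^ α := Real.rpow_nonneg (norm_nonneg x) α
    set SU := ∑ i, |pderiv d i (pderiv d i φ) x| with hSU
    set SV := ∑ i, |pderiv d i φ x| with hSV
    have hSU0 : 0 ≤ SU := Finset.sum_nonneg fun i _ => abs_nonneg _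
    have hSV0 : 0 ≤ SV := Finset.sum_nonneg fun i _ => abs_nonneg _
    have hsplit : locDiffOp d ϑ x₀ δ φ x - ϑ x₀ * laplacian d φ x
        - δ * linDiffOp d ϑ x₀ φ x
        = (ϑ (δ • x + x₀) - ϑ x₀ - δ * (inner ℝ (gradient ϑ x₀) x : ℝ)) * laplacian d φ x
          + δ * (inner ℝ (gradient ϑ (δ • x + x₀) - gradient ϑ x₀) (gradient φ x) : ℝ) := by
      simp only [locDiffOp, linDiffOp, inner_sub_left]
      ring
    have hns : ‖δ • x‖ = δ * ‖x‖ := by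
      rw [norm_smul, Real.norm_eq_abs, abs_of_pos hδ]
    -- first term
    have ht1 : |(ϑ (δ • x + x₀) - ϑ x₀ - δ * (inner ℝ (gradient ϑ x₀) x : ℝ))
        * laplacian d φ x| ≤ K * (‖x‖ ^ α * SU) := by
      have ht := taylor_bound hϑ hα1 hc0 hH' x₀ (δ • x)
      rw [real_inner_smul_right, hns, Real.mul_rpow hδ.le (norm_nonneg x)] at ht
      have hL : |laplacian d φ x| ≤ SU := by
        rw [hSU, laplacian]
        exact Finset.abs_sum_le_sum_abs _ _
      calc |(ϑ (δ • x + x₀) - ϑ x₀ - δ * (inner ℝ (gradient ϑ x₀) x : ℝ)) * laplacian d φ x|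
          = |ϑ (δ • x + x₀) - ϑ x₀ - δ * (inner ℝ (gradient ϑ x₀) x : ℝ)|
            * |laplacian d φ x| := abs_mul _ _
        _ ≤ (c * (δ ^ α * ‖x‖ ^ α)) * SU :=
            mul_le_mul ht hL (abs_nonneg _) (by positivity)
        _ = K * (‖x‖ ^ α * SU) := by rw [hK]; ring
    -- second term
    have ht2 : |δ * (inner ℝ (gradient ϑ (δ • x + x₀) - gradient ϑ x₀) (gradient φ x) : ℝ)|
        ≤ K * ((1 + ‖x‖ ^ α) * SV) := by
      have hg : ‖gradient ϑ (δ • x + x₀) - gradient ϑ x₀‖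
          ≤ c * (δ ^ (α - 1) * ‖x‖ ^ (α - 1)) := by
        have := hH' (δ • x + x₀) x₀
        rwa [add_sub_cancel_right, hns, Real.mul_rpow hδ.le (norm_nonneg x)] at this
      have hδδ : δ * δ ^ (α - 1) = δ ^ α := by
        rw [mul_comm, ← Real.rpow_add_one hδ.ne' (α - 1), sub_add_cancel]
      have hxa1 : ‖x‖ ^ (α - 1) ≤ 1 + ‖x‖ ^ α := by
        rcases le_or_gt ‖x‖ 1 with h1 | h1
        · have := Real.rpow_le_one (norm_nonneg x) h1 (by linarith : (0:ℝ) ≤ α - 1)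
          linarith
        · have := Real.rpow_le_rpow_of_exponent_le h1.le (by linarith : α - 1 ≤ α)
          linarith
      calc |δ * (inner ℝ (gradient ϑ (δ • x + x₀) - gradient ϑ x₀) (gradient φ x) : ℝ)|
          = δ * |(inner ℝ (gradient ϑ (δ • x + x₀) - gradient ϑ x₀) (gradient φ x) : ℝ)| := by
            rw [abs_mul, abs_of_pos hδ]
        _ ≤ δ * (‖gradient ϑ (δ • x + x₀) - gradient ϑ x₀‖ * ‖gradient φ x‖) :=
            mul_le_mul_of_nonneg_left (abs_real_inner_le_norm _ _) hδ.le
        _ ≤ δ * ((c * (δ ^ (α - 1) * ‖x‖ ^ (α - 1))) * SV) := by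
            refine mul_le_mul_of_nonneg_left ?_ hδ.le
            exact mul_le_mul hg (norm_gradient_le φ x) (norm_nonneg _) (by positivity)
        _ = K * (‖x‖ ^ (α - 1) * SV) := by rw [hK, ← hδδ]; ring
        _ ≤ K * ((1 + ‖x‖ ^ α) * SV) := by
            exact mul_le_mul_of_nonneg_left
              (mul_le_mul_of_nonneg_right hxa1 hSV0) hK0
    -- combine
    have hBx : K * B x = K * (‖x‖ ^ α * SU) + K * ((1 + ‖x‖ ^ α) * SV) := by
      have h1 : ∑ i, |u i x| = ‖x‖ ^ α * SU := by
        rw [hSU, Finset.mul_sum]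
        refine Finset.sum_congr rfl fun i _ => ?_
        rw [hu, abs_mul, abs_of_nonneg hxα]
      have h2 : ∑ i, (|v i x| + |w i x|) = SV + ‖x‖ ^ α * SV := by
        rw [Finset.sum_add_distrib, hSV, Finset.mul_sum]
        congr 1
        refine Finset.sum_congr rfl fun i _ => ?_
        simp only [hv, hw]
        rw [abs_mul, abs_of_nonneg hxα]
      rw [hB]
      simp only [h1, h2]
      ring
    rw [hsplit, hBx]
    exact (abs_add_le _ _).trans (add_le_add ht1 ht2)
  -- eLpNorm estimates
  have hB0 : ∀ x, 0 ≤ B x := fun x => by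
    rw [hB]
    have : (0:ℝ) ≤ ∑ i, |u i x| := Finset.sum_nonneg fun i _ => abs_nonneg _
    have : (0:ℝ) ≤ ∑ i, (|v i x| + |w i x|) :=
      Finset.sum_nonneg fun i _ => add_nonneg (abs_nonneg _) (abs_nonneg _)
    positivity
  have step1 : eLpNorm (fun x => locDiffOp d ϑ x₀ δ φ x - ϑ x₀ * laplacian d φ x
      - δ * linDiffOp d ϑ x₀ φ x) p volume ≤ eLpNorm (fun x => K * B x) p volume := by
    refine eLpNorm_mono fun x => ?_
    rw [Real.norm_eq_abs, Real.norm_eq_abs, abs_of_nonneg (mul_nonneg hK0 (hB0 x))]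
    exact hpt x
  have step2 : eLpNorm (fun x => K * B x) p volume = ENNReal.ofReal K * eLpNorm B p volume := by
    have : (fun x => K * B x) = K • B := rfl
    rw [this, eLpNorm_const_smul, Real.enorm_eq_ofReal hK0]
  -- per-piece bounds
  have hu_le : ∀ i : Fin d, eLpNorm (u i) p volume ≤ W := by
    intro i
    set γ : Fin d → Fin 3 := fun j => if j = i then (2 : Fin 3) else 0 with hγ
    have hcoe : (fun j => ((γ j : ℕ))) = fun j => if j = i then 2 else 0 := by
      funext j; by_cases h : j = i <;> simp [hγ, h]
    have hsum : (∑ j, (γ j : ℕ)) ≤ 2 := by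
      rw [hcoe]
      simp
    have hmd : mderiv d (fun j => (γ j : ℕ)) φ = pderiv d i (pderiv d i φ) := by
      rw [hcoe, mderiv_single]
      rfl
    have := le_wSobolevNorm p α φ γ hsum
    rw [hmd] at this
    exact le_trans (le_add_self) this
  have hvw_le : ∀ i : Fin d, eLpNorm (v i) p volume + eLpNorm (w i) p volume ≤ W := by
    intro i
    set γ : Fin d → Fin 3 := fun j => if j = i then (1 : Fin 3) else 0 with hγ
    have hcoe : (fun j => ((γ j : ℕ))) = fun j => if j = i then 1 else 0 := by
      funext j; by_cases h : j = i <;> simp [hγ, h]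
    have hsum : (∑ j, (γ j : ℕ)) ≤ 2 := by
      rw [hcoe]
      simp
    have hmd : mderiv d (fun j => (γ j : ℕ)) φ = pderiv d i φ := by
      rw [hcoe, mderiv_single]
      rfl
    have := le_wSobolevNorm p α φ γ hsum
    rw [hmd] at this
    exact this
  -- splitting B
  have step3 : eLpNorm B p volume ≤ (d : ℝ≥0∞) * W + (d : ℝ≥0∞) * W := by
    have hBfun : B = (fun x => ∑ i, |u i x|) + (fun x => ∑ i, (|v i x| + |w i x|)) := rfl
    have hm1 : AEStronglyMeasurable (fun x => ∑ i, |u i x|) (volume : Measure (Esp d)) :=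
      (continuous_finset_sum _ fun i _ => (hcu i).abs).aestronglyMeasurable
    have hm2 : AEStronglyMeasurable (fun x => ∑ i, (|v i x| + |w i x|))
        (volume : Measure (Esp d)) :=
      (continuous_finset_sum _ fun i _ => ((hcv i).abs.add (hcw i).abs)).aestronglyMeasurable
    calc eLpNorm B p volume
        ≤ eLpNorm (fun x => ∑ i, |u i x|) p volume
          + eLpNorm (fun x => ∑ i, (|v i x| + |w i x|)) p volume := by
          rw [hBfun]
          exact eLpNorm_add_le hm1 hm2 hp
      _ ≤ (d : ℝ≥0∞) * W + (d : ℝ≥0∞) * W := by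
          gcongr
          · -- first sum
            have hsum1 : (fun x => ∑ i, |u i x|) = ∑ i : Fin d, fun x => |u i x| := by
              funext x; simp
            rw [hsum1]
            calc eLpNorm (∑ i : Fin d, fun x => |u i x|) p volume
                ≤ ∑ i : Fin d, eLpNorm (fun x => |u i x|) p volume :=
                  eLpNorm_sum_le (fun i _ => (hcu i).abs.aestronglyMeasurable) hp
              _ ≤ ∑ _i : Fin d, W := by
                  refine Finset.sum_le_sum fun i _ => ?_
                  refine le_trans (eLpNorm_mono fun x => ?_) (hu_le i)
                  simp [Real.norm_eq_abs, abs_abs]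
              _ = (d : ℝ≥0∞) * W := by
                  rw [Finset.sum_const, Finset.card_univ, Fintype.card_fin, nsmul_eq_mul]
          · -- second sum
            have hsum2 : (fun x => ∑ i, (|v i x| + |w i x|))
                = ∑ i : Fin d, fun x => |v i x| + |w i x| := by
              funext x; simp
            rw [hsum2]
            calc eLpNorm (∑ i : Fin d, fun x => |v i x| + |w i x|) p volume
                ≤ ∑ i : Fin d, eLpNorm (fun x => |v i x| + |w i x|) p volume :=
                  eLpNorm_sum_le (fun i _ =>
                    ((hcv i).abs.add (hcw i).abs).aestronglyMeasurable) hp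
              _ ≤ ∑ _i : Fin d, W := by
                  refine Finset.sum_le_sum fun i _ => ?_
                  refine le_trans ?_ (hvw_le i)
                  refine le_trans (eLpNorm_add_le ((hcv i).abs.aestronglyMeasurable)
                    ((hcw i).abs.aestronglyMeasurable) hp) ?_
                  gcongr
                  · exact eLpNorm_mono fun x => by simp [Real.norm_eq_abs, abs_abs]
                  · exact eLpNorm_mono fun x => by simp [Real.norm_eq_abs, abs_abs]
              _ = (d : ℝ≥0∞) * W := by
                  rw [Finset.sum_const, Finset.card_univ, Fintype.card_fin, nsmul_eq_mul]
  -- final assembly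
  calc eLpNorm (fun x => locDiffOp d ϑ x₀ δ φ x - ϑ x₀ * laplacian d φ x
      - δ * linDiffOp d ϑ x₀ φ x) p volume
      ≤ ENNReal.ofReal K * eLpNorm B p volume := by rw [← step2]; exact step1
    _ ≤ ENNReal.ofReal K * ((d : ℝ≥0∞) * W + (d : ℝ≥0∞) * W) := by gcongr
    _ = (ENNReal.ofReal K * (2 * d : ℕ)) * W := by
        push_cast
        ring
    _ ≤ ENNReal.ofReal (2 * d * (c + 1) * δ ^ α) * W := by
        gcongr
        rw [show ((2 * d : ℕ) : ℝ≥0∞) = ENNReal.ofReal ((2 * d : ℕ) : ℝ) from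
          (ENNReal.ofReal_natCast _).symm, ← ENNReal.ofReal_mul hK0]
        refine ENNReal.ofReal_le_ofReal ?_
        push_cast
        rw [hK]
        nlinarith [hδα, hc0, hd1]
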